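/- For any q ≥ 1, any positive reals a₁,…,a_q, the function g_{a₁,…,a_q}(u) = q^q · u · ∏_{i=2}^q (aᵢ + u − aᵢu) / (∑ᵢ aᵢ − (∑ᵢ aᵢ − q)u)^q is monotone increasing on [0,1] and takes values in [0,1], with g(0) = 0 and g(1) = 1. -/

import Mathlib

lemma pos_aux {c u : ℝ} (hc : 0 < c) (h0 : 0 ≤ u) (h1 : u ≤ 1) : 0 < c * (1 - u) + u := by
  rcases eq_or_lt_of_le h0 with h | h
  · rw [← h]; simpa using hc
  · nlinarith [mul_nonneg hc.le (sub_nonneg.2 h1)]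

noncomputable def g (q : ℕ) (a : ℕ → ℝ) (u : ℝ) : ℝ :=
  (q : ℝ) ^ q * u * (∏ i ∈ Finset.Icc 2 q, (a i + u - a i * u)) /
    ((∑ i ∈ Finset.Icc 1 q, a i) - ((∑ i ∈ Finset.Icc 1 q, a i) - q) * u) ^ q

theorem stmt_4 (q : ℕ) (hq : 1 ≤ q) (a : ℕ → ℝ)
    (ha : ∀ i ∈ Finset.Icc 1 q, 0 < a i) :
    MonotoneOn (g q a) (Set.Icc (0:ℝ) 1) ∧
    Set.MapsTo (g q a) (Set.Icc (0:ℝ) 1) (Set.Icc (0:ℝ) 1) ∧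
    g q a 0 = 0 ∧ g q a 1 = 1 := by
  have hq0 : (0:ℝ) < q := by exact_mod_cast hq
  set S : ℝ := ∑ i ∈ Finset.Icc 1 q, a i with hSdef
  have hS : 0 < S := Finset.sum_pos ha ⟨1, Finset.mem_Icc.2 ⟨le_refl 1, hq⟩⟩
  have hQP : ∀ u : ℝ, 0 ≤ u → u ≤ 1 → 0 < S - (S - q) * u := by
    intro u h0 h1
    have hrw : S - (S - (q:ℝ)) * u = S * (1 - u) + u + (q - 1) * u := by ring
    have hq1 : (1:ℝ) ≤ q := by exact_mod_cast hq
    have h2 : 0 ≤ ((q:ℝ) - 1) * u := mul_nonneg (by linarith) h0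
    rw [hrw]
    have := pos_aux hS h0 h1
    linarith
  have hai : ∀ i ∈ Finset.Icc 2 q, 0 < a i := by
    intro i hi
    exact ha i (Finset.mem_Icc.2 ⟨le_trans one_le_two (Finset.mem_Icc.1 hi).1,
      (Finset.mem_Icc.1 hi).2⟩)
  have hx : ∀ u : ℝ, 0 ≤ u → u ≤ 1 → ∀ i ∈ Finset.Icc 2 q, 0 < a i + u - a i * u := by
    intro u h0 h1 i hi
    have : a i + u - a i * u = a i * (1 - u) + u := by ring
    rw [this]; exact pos_aux (hai i hi) h0 h1
  -- fold g
  have heq : g q a = fun v => (q:ℝ)^q * v *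
      (∏ i ∈ Finset.Icc 2 q, (a i + v - a i * v)) / (S - (S - (q:ℝ))*v)^q := by
    funext v; rfl
  -- abbreviations
  set P : ℝ → ℝ := fun v => ∏ i ∈ Finset.Icc 2 q, (a i + v - a i * v) with hPdef
  set P' : ℝ → ℝ := fun v => ∑ i ∈ Finset.Icc 2 q,
      (∏ j ∈ (Finset.Icc 2 q).erase i, (a j + v - a j * v)) * (1 - a i) with hP'def
  set G' : ℝ → ℝ := fun v =>
      (((q:ℝ)^q * P v + (q:ℝ)^q * v * P' v) * (S - (S - (q:ℝ))*v)^q -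
        (q:ℝ)^q * v * P v * ((q:ℝ) * (S - (S - (q:ℝ))*v)^(q-1) * (-(S - (q:ℝ))))) /
        ((S - (S - (q:ℝ))*v)^q)^2 with hG'def
  have hderiv : ∀ u : ℝ, 0 ≤ u → u ≤ 1 → HasDerivAt (g q a) (G' u) u := by
    intro u h0 h1
    have hQu := hQP u h0 h1
    have hP : HasDerivAt P (P' u) u := by
      have h := HasDerivAt.fun_finsetProd (u := Finset.Icc 2 q)
        (f := fun i (v:ℝ) => a i + v - a i * v) (f' := fun i => 1 - a i) (x := u)
        (fun i _ => by
          simpa using ((hasDerivAt_id u).const_add (a i)).fun_sub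
            ((hasDerivAt_id u).const_mul (a i)))
      simpa [smul_eq_mul] using h
    have hcu : HasDerivAt (fun v:ℝ => (q:ℝ)^q * v) ((q:ℝ)^q) u := by
      simpa using (hasDerivAt_id u).const_mul ((q:ℝ)^q)
    have hNum : HasDerivAt (fun v => (q:ℝ)^q * v * P v)
        ((q:ℝ)^q * P u + (q:ℝ)^q * u * P' u) u := hcu.mul hP
    have hQb : HasDerivAt (fun v : ℝ => S - (S - (q:ℝ))*v) (-(S - (q:ℝ))) u := by
      simpa using (hasDerivAt_const u S).fun_sub ((hasDerivAt_id u).const_mul (S - (q:ℝ)))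
    have hDen : HasDerivAt (fun v : ℝ => (S - (S - (q:ℝ))*v)^q)
        ((q:ℝ) * (S - (S - (q:ℝ))*u)^(q-1) * (-(S - (q:ℝ)))) u := hQb.pow q
    have hdiv := hNum.div hDen (ne_of_gt (pow_pos hQu q))
    rw [heq]
    exact hdiv
  -- endpoints
  have hg0 : g q a 0 = 0 := by rw [heq]; simp
  have hg1 : g q a 1 = 1 := by
    rw [heq]
    simp only
    rw [Finset.prod_congr rfl (fun i _ => by ring : ∀ i ∈ Finset.Icc 2 q,
      a i + 1 - a i * 1 = 1), Finset.prod_const_one]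
    rw [show S - (S - (q:ℝ))*1 = (q:ℝ) by ring]
    rw [mul_one, mul_one, div_self (by positivity)]
  -- nonnegativity of derivative on the open interval
  have hG'nonneg : ∀ v : ℝ, 0 < v → v < 1 → 0 ≤ G' v := by
    intro v hv hv1
    have hQv : 0 < S - (S - (q:ℝ))*v := hQP v hv.le hv1.le
    have hxv := hx v hv.le hv1.le
    have hPv : 0 < P v := Finset.prod_pos hxv
    set R : ℝ := ∑ i ∈ Finset.Icc 2 q, a i / (a i + v - a i * v) with hRdef
    set T : ℝ := ∑ i ∈ Finset.Icc 2 q, (a i + v - a i * v)⁻¹ with hTdef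
    -- u P' = (q-1) P - R P
    have huP' : v * P' v = ((q:ℝ) - 1) * P v - R * P v := by
      have hterm : ∀ i ∈ Finset.Icc 2 q,
          v * ((∏ j ∈ (Finset.Icc 2 q).erase i, (a j + v - a j * v)) * (1 - a i))
          = P v - (a i / (a i + v - a i * v)) * P v := by
        intro i hi
        have hxi := hxv i hi
        have hprod : (∏ j ∈ (Finset.Icc 2 q).erase i, (a j + v - a j * v)) *
            (a i + v - a i * v) = P v := Finset.prod_erase_mul _ _ hi
        rw [← hprod]
        have hxi' : a i + v - v * a i ≠ 0 := by rw [mul_comm]; exact hxi.ne'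
        field_simp
        ring
      calc v * P' v = ∑ i ∈ Finset.Icc 2 q,
            (P v - (a i / (a i + v - a i * v)) * P v) := by
            rw [hP'def, Finset.mul_sum]; exact Finset.sum_congr rfl hterm
        _ = ((q:ℝ) - 1) * P v - R * P v := by
            rw [Finset.sum_sub_distrib, Finset.sum_const, ← Finset.sum_mul, ← hRdef,
              Nat.card_Icc, nsmul_eq_mul]
            congr 2
            rw [show q + 1 - 2 = q - 1 by omega, Nat.cast_sub hq, Nat.cast_one]
    -- (1-v) R + v T = q - 1
    have h2eq : (1 - v) * R + v * T = (q:ℝ) - 1 := by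
      have : ∀ i ∈ Finset.Icc 2 q,
          (1 - v) * (a i / (a i + v - a i * v)) + v * (a i + v - a i * v)⁻¹ = 1 := by
        intro i hi
        have hxi := hxv i hi
        have hxi' : a i + v - v * a i ≠ 0 := by rw [mul_comm]; exact hxi.ne'
        field_simp
        ring
      rw [hRdef, hTdef, Finset.mul_sum, Finset.mul_sum, ← Finset.sum_add_distrib,
        Finset.sum_congr rfl this, Finset.sum_const, Nat.card_Icc, nsmul_eq_mul, mul_one,
        show q + 1 - 2 = q - 1 by omega, Nat.cast_sub hq, Nat.cast_one]
    -- Cauchy-Schwarz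
    have hy : ∀ i ∈ Finset.Icc 1 q, 0 < (if i = 1 then 0 else a i) * (1 - v) + v := by
      intro i hi
      rcases eq_or_ne i 1 with h | h
      · simp [h]; linarith
      · rw [if_neg h]
        refine pos_aux ?_ hv.le hv1.le
        exact ha i hi
    have hCS : ((q:ℝ))^2 ≤ (∑ i ∈ Finset.Icc 1 q, ((if i = 1 then 0 else a i) * (1 - v) + v)) *
        (∑ i ∈ Finset.Icc 1 q, ((if i = 1 then 0 else a i) * (1 - v) + v)⁻¹) := by
      have h := Finset.sum_mul_sq_le_sq_mul_sq (Finset.Icc 1 q)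
        (fun i => Real.sqrt ((if i = 1 then 0 else a i) * (1 - v) + v))
        (fun i => (Real.sqrt ((if i = 1 then 0 else a i) * (1 - v) + v))⁻¹)
      have e1 : ∀ i ∈ Finset.Icc 1 q,
          Real.sqrt ((if i = 1 then 0 else a i) * (1 - v) + v) *
            (Real.sqrt ((if i = 1 then 0 else a i) * (1 - v) + v))⁻¹ = 1 := by
        intro i hi
        exact mul_inv_cancel₀ (Real.sqrt_ne_zero'.2 (hy i hi))
      have e2 : ∀ i ∈ Finset.Icc 1 q,
          (Real.sqrt ((if i = 1 then 0 else a i) * (1 - v) + v))^2 =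
            (if i = 1 then 0 else a i) * (1 - v) + v := by
        intro i hi; exact Real.sq_sqrt (hy i hi).le
      have e3 : ∀ i ∈ Finset.Icc 1 q,
          ((Real.sqrt ((if i = 1 then 0 else a i) * (1 - v) + v))⁻¹)^2 =
            ((if i = 1 then 0 else a i) * (1 - v) + v)⁻¹ := by
        intro i hi; rw [inv_pow, Real.sq_sqrt (hy i hi).le]
      rw [Finset.sum_congr rfl e1, Finset.sum_congr rfl e2, Finset.sum_congr rfl e3,
        Finset.sum_const, Nat.card_Icc, nsmul_eq_mul, mul_one] at h
      calc ((q:ℝ))^2 = ((q + 1 - 1 : ℕ) : ℝ)^2 := by norm_num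
        _ ≤ _ := h
    -- sum y ≤ Q
    have hsumy : (∑ i ∈ Finset.Icc 1 q, ((if i = 1 then 0 else a i) * (1 - v) + v))
        ≤ S - (S - (q:ℝ))*v := by
      have h1 : (∑ i ∈ Finset.Icc 1 q, ((if i = 1 then 0 else a i) * (1 - v) + v))
          ≤ ∑ i ∈ Finset.Icc 1 q, (a i * (1 - v) + v) := by
        refine Finset.sum_le_sum fun i hi => ?_
        rcases eq_or_ne i 1 with h | h
        · rw [if_pos h, h]
          nlinarith [(ha 1 (Finset.mem_Icc.2 ⟨le_refl 1, hq⟩)).le, sub_nonneg.2 hv1.le]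
        · rw [if_neg h]
      have h2 : ∑ i ∈ Finset.Icc 1 q, (a i * (1 - v) + v) = S - (S - (q:ℝ))*v := by
        rw [Finset.sum_add_distrib, ← Finset.sum_mul, ← hSdef, Finset.sum_const,
          Nat.card_Icc, nsmul_eq_mul]
        rw [show q + 1 - 1 = q by omega]
        ring
      linarith
    -- sum of inverses
    have hsuminv : (∑ i ∈ Finset.Icc 1 q, ((if i = 1 then 0 else a i) * (1 - v) + v)⁻¹)
        = v⁻¹ + T := by
      rw [Finset.Icc_eq_cons_Ioc hq, Finset.sum_cons]
      congr 1
      · norm_num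
      · rw [← Finset.Icc_add_one_left_eq_Ioc, hTdef]
        refine Finset.sum_congr rfl fun i hi => ?_
        have : i ≠ 1 := by
          have := (Finset.mem_Icc.1 hi).1; omega
        rw [if_neg this]
        congr 1
        ring
    have hinvnonneg : 0 ≤ ∑ i ∈ Finset.Icc 1 q, ((if i = 1 then 0 else a i) * (1 - v) + v)⁻¹ :=
      Finset.sum_nonneg fun i hi => (inv_pos.2 (hy i hi)).le
    have hC : ((q:ℝ))^2 ≤ (S - (S - (q:ℝ))*v) * (v⁻¹ + T) := by
      calc ((q:ℝ))^2 ≤ _ := hCS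
        _ ≤ (S - (S - (q:ℝ))*v) * (∑ i ∈ Finset.Icc 1 q,
              ((if i = 1 then 0 else a i) * (1 - v) + v)⁻¹) :=
            mul_le_mul_of_nonneg_right hsumy hinvnonneg
        _ = (S - (S - (q:ℝ))*v) * (v⁻¹ + T) := by rw [hsuminv]
    have hC2 : ((q:ℝ))^2 * v ≤ (S - (S - (q:ℝ))*v) * (1 + v * T) := by
      have h := mul_le_mul_of_nonneg_right hC hv.le
      have hrw : ((S - (S - (q:ℝ))*v) * (v⁻¹ + T)) * v = (S - (S - (q:ℝ))*v) * (1 + v * T) := by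
        calc ((S - (S - (q:ℝ))*v) * (v⁻¹ + T)) * v
            = (S - (S - (q:ℝ))*v) * (v⁻¹ * v + T * v) := by ring
          _ = (S - (S - (q:ℝ))*v) * (1 + v * T) := by
              rw [inv_mul_cancel₀ (ne_of_gt hv)]; ring
      rw [hrw] at h
      exact h
    -- key inequality
    have key : R * (S - (S - (q:ℝ))*v) ≤ (q:ℝ) * S := by
      have hQve : S - (S - (q:ℝ))*v = S * (1 - v) + (q:ℝ) * v := by ring
      have expand : (1 - v) * ((q:ℝ) * S - R * (S - (S - (q:ℝ))*v))
          = (S - (S - (q:ℝ))*v) * (1 + v * T) - ((q:ℝ))^2 * v := by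
        linear_combination (-(S - (S - (q:ℝ))*v)) * h2eq
      have h9 : 0 ≤ (1 - v) * ((q:ℝ) * S - R * (S - (S - (q:ℝ))*v)) := by
        rw [expand]; linarith
      nlinarith [h9, sub_pos.2 hv1]
    -- conclude
    rw [hG'def]
    apply div_nonneg _ (by positivity)
    have hpow : (S - (S - (q:ℝ))*v)^q = (S - (S - (q:ℝ))*v)^(q-1) * (S - (S - (q:ℝ))*v) := by
      rw [← pow_succ]
      congr 1
      omega
    rw [hpow]
    set W : ℝ := (S - (S - (q:ℝ))*v)^(q-1) with hWdef
    have hW : 0 < W := pow_pos hQv _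
    have hgoal_eq : ((q:ℝ)^q * P v + (q:ℝ)^q * v * P' v) * (W * (S - (S - (q:ℝ))*v)) -
        (q:ℝ)^q * v * P v * ((q:ℝ) * W * (-(S - (q:ℝ))))
        = (q:ℝ)^q * W * P v * ((q:ℝ) * S - R * (S - (S - (q:ℝ))*v)) := by
      linear_combination ((q:ℝ)^q * W * (S - (S - (q:ℝ))*v)) * huP'
    rw [hgoal_eq]
    have : 0 ≤ (q:ℝ) * S - R * (S - (S - (q:ℝ))*v) := by linarith
    positivity
  -- monotonicity
  have hmono : MonotoneOn (g q a) (Set.Icc (0:ℝ) 1) := by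
    apply monotoneOn_of_deriv_nonneg (convex_Icc 0 1)
    · intro v hv
      exact (hderiv v hv.1 hv.2).continuousAt.continuousWithinAt
    · rw [interior_Icc]
      intro v hv
      exact (hderiv v hv.1.le hv.2.le).differentiableAt.differentiableWithinAt
    · rw [interior_Icc]
      intro v hv
      rw [(hderiv v hv.1.le hv.2.le).deriv]
      exact hG'nonneg v hv.1 hv.2
  refine ⟨hmono, ?_, hg0, hg1⟩
  intro u hu
  constructor
  · calc (0:ℝ) = g q a 0 := hg0.symm
      _ ≤ g q a u := hmono (Set.mem_Icc.2 ⟨le_refl 0, zero_le_one⟩) hu hu.1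
  · calc g q a u ≤ g q a 1 := hmono hu (Set.mem_Icc.2 ⟨zero_le_one, le_refl 1⟩) hu.2
      _ = 1 := hg1
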